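/- In a free group, the only element conjugate to its own inverse is the identity. That is, if F is a free group and g, h ∈ F with h·g·h⁻¹ = g⁻¹, then g = 1. -/

import Mathlib

set_option linter.unusedSectionVars false
set_option maxHeartbeats 1000000

namespace ConjAux
open FreeGroup List

variable {α : Type*} [DecidableEq α]

def NC (p q : α × Bool) : Prop := ¬(p.1 = q.1 ∧ p.2 = !q.2)

lemma chain'_reduce (L : List (α × Bool)) : List.Chain' NC (FreeGroup.reduce L) := by
  induction L with
  | nil => simp [List.Chain']
  | cons x L ih =>
    rw [FreeGroup.reduce.cons]
    rcases hL : FreeGroup.reduce L with _ | ⟨hd, tl⟩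
    · simp [List.Chain']
    · rw [hL] at ih
      by_cases hc : x.1 = hd.1 ∧ x.2 = !hd.2
      · simpa [hc, List.Chain'] using ih.tail
      · simp only [if_neg hc]
        exact List.isChain_cons_cons.2 ⟨hc, ih⟩

lemma reduce_eq_self {L : List (α × Bool)} (h : List.Chain' NC L) :
    FreeGroup.reduce L = L := by
  induction L with
  | nil => rfl
  | cons x L ih =>
    rw [FreeGroup.reduce.cons, ih h.tail]
    cases L with
    | nil => rfl
    | cons hd tl => exact if_neg (List.isChain_cons_cons.1 h).1

lemma toWord_mk_chain {L : List (α × Bool)} (h : List.Chain' NC L) :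
    (FreeGroup.mk L).toWord = L := by
  rw [FreeGroup.toWord_mk, reduce_eq_self h]

lemma chain'_toWord (g : FreeGroup α) : List.Chain' NC g.toWord := by
  rw [← FreeGroup.reduce_toWord g]; exact chain'_reduce _

lemma NC_inv_iff (p q : α × Bool) : NC (q.1, !q.2) (p.1, !p.2) ↔ NC p q := by
  rcases p with ⟨a, b⟩; rcases q with ⟨c, d⟩
  cases b <;> cases d <;> simp [NC, eq_comm]

lemma chain'_invRev {L : List (α × Bool)} (h : List.Chain' NC L) :
    List.Chain' NC (FreeGroup.invRev L) := by
  rw [FreeGroup.invRev, List.Chain', List.isChain_reverse, List.isChain_map]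
  exact h.imp fun p q hpq => (NC_inv_iff p q).2 hpq

lemma inv_letter (a : α × Bool) :
    (FreeGroup.mk [a])⁻¹ = FreeGroup.mk [(a.1, !a.2)] := by
  rw [FreeGroup.inv_mk]
  simp [FreeGroup.invRev]

lemma cr_chain {w : List (α × Bool)} (h : List.Chain' NC (w ++ w)) :
    List.Chain' NC w := (List.isChain_append.1 h).1

lemma cr_three {w : List (α × Bool)} (h : List.Chain' NC (w ++ w)) :
    List.Chain' NC (w ++ w ++ w) := by
  rcases List.isChain_append.1 h with ⟨h1, h2, hbd⟩
  refine List.isChain_append.2 ⟨h, h1, ?_⟩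
  rcases eq_or_ne w [] with rfl | hw
  · simp
  · intro p hp q hq
    rw [List.getLast?_append_of_ne_nil _ hw] at hp
    exact hbd p hp q hq

lemma cr_rotate {w : List (α × Bool)} (h : List.Chain' NC (w ++ w)) (j : ℕ) :
    List.Chain' NC (w.rotate j ++ w.rotate j) := by
  rcases eq_or_ne w [] with rfl | hw
  · simp [List.Chain']
  · have h3 := cr_three h
    have hrw : w.rotate j = w.drop (j % w.length) ++ w.take (j % w.length) :=
      List.rotate_eq_drop_append_take_mod
    rw [hrw]
    have key : ∀ t d : List (α × Bool), t ++ d = w →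
        (d ++ t) ++ (d ++ t) <:+: w ++ w ++ w := by
      intro t d htd
      refine ⟨t, d, ?_⟩
      rw [← htd]
      simp [List.append_assoc]
    exact h3.infix (key _ _ (List.take_append_drop _ _))

lemma conj_rotate : ∀ (N : ℕ) (u g : FreeGroup α), u.toWord.length ≤ N →
    List.Chain' NC (g.toWord ++ g.toWord) →
    (u * g * u⁻¹).toWord.length ≤ g.toWord.length →
    ∃ k, (u * g * u⁻¹).toWord = g.toWord.rotate k := by
  intro N
  induction N with
  | zero =>
    intro u g hu _ _
    have : u = 1 := by
      rw [← FreeGroup.mk_toWord (x := u), List.length_eq_zero_iff.1 (Nat.le_zero.1 hu)]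
      rfl
    subst this
    exact ⟨0, by simp⟩
  | succ N IH =>
    intro u g hu hg hlen
    rcases eq_or_ne u.toWord [] with hL | hL
    · have : u = 1 := by rw [← FreeGroup.mk_toWord (x := u), hL]; rfl
      subst this
      exact ⟨0, by simp⟩
    · set L := u.toWord with hLdef
      set a := L.getLast hL with ha
      set L' := L.dropLast with hL'
      have hLsplit : L' ++ [a] = L := List.dropLast_append_getLast hL
      have hLchain : List.Chain' NC L := chain'_toWord u
      have hL'chain : List.Chain' NC L' := by
        rw [← hLsplit] at hLchain
        exact (List.isChain_append.1 hLchain).1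
      have hbdL : ∀ p ∈ L'.getLast?, NC p a := by
        rw [← hLsplit] at hLchain
        intro p hp
        exact (List.isChain_append.1 hLchain).2.2 p hp a rfl
      set u' := FreeGroup.mk L' with hu'
      have hu'word : u'.toWord = L' := toWord_mk_chain hL'chain
      have hu'len : u'.toWord.length ≤ N := by
        rw [hu'word]
        have := List.length_pos_iff.2 hL
        have h2 : L'.length = L.length - 1 := by
          rw [hL']; simp
        omega
      set va := FreeGroup.mk [a] with hva
      have huva : u = u' * va := by
        rw [hu', hva, FreeGroup.mul_mk, hLsplit, hLdef, FreeGroup.mk_toWord]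
      have hsplit_conj : u * g * u⁻¹ = u' * (va * g * va⁻¹) * u'⁻¹ := by
        rw [huva]; group
      set w := g.toWord with hw
      have hgw : g = FreeGroup.mk w := (FreeGroup.mk_toWord).symm
      have hwchain : List.Chain' NC w := chain'_toWord g
      rcases hwe : w with _ | ⟨x, t⟩
      · have : g = 1 := by rw [hgw, hwe]; rfl
        subst this
        refine ⟨0, by simp⟩
      · by_cases hx : a.1 = x.1 ∧ a.2 = !x.2
        · -- left cancellation: x = inv a
          have hxa : x = (a.1, !a.2) := by
            rcases hx with ⟨h1, h2⟩
            refine Prod.ext h1.symm ?_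
            rw [h2, Bool.not_not]
          have hvainv : va⁻¹ = FreeGroup.mk [x] := by
            rw [hva, inv_letter, hxa]
          set g₁ := FreeGroup.mk (t ++ [x]) with hg₁
          have hg1eq : va * g * va⁻¹ = g₁ := by
            have : g = va⁻¹ * FreeGroup.mk t := by
              rw [hvainv, FreeGroup.mul_mk, hgw, hwe]; rfl
            rw [this, hg₁, ← FreeGroup.mul_mk, ← hvainv]
            group
          have hrot : t ++ [x] = w.rotate 1 := by
            rw [hwe, List.rotate_cons_succ, List.rotate_zero]
          have hcrrot : List.Chain' NC ((t ++ [x]) ++ (t ++ [x])) := by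
            have := cr_rotate hg 1
            rwa [← hrot] at this
          have hg₁word : g₁.toWord = t ++ [x] := toWord_mk_chain (cr_chain hcrrot)
          have hcr1 : List.Chain' NC (g₁.toWord ++ g₁.toWord) := by
            rw [hg₁word]; exact hcrrot
          have heq : u' * g₁ * u'⁻¹ = u * g * u⁻¹ := by
            rw [hsplit_conj, hg1eq]
          have hlen1 : (u' * g₁ * u'⁻¹).toWord.length ≤ g₁.toWord.length := by
            rw [heq, hg₁word]
            have : (t ++ [x]).length = w.length := by rw [hwe]; simp
            rw [this]
            exact hlen
          obtain ⟨k, hk⟩ := IH u' g₁ hu'len hcr1 hlen1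
          refine ⟨1 + k, ?_⟩
          rw [← heq, hk, hg₁word, hrot, List.rotate_rotate, hwe]
        · by_cases hy : w.getLast (by rw [hwe]; simp) = a
          · -- right cancellation
            set d := w.dropLast with hd
            have hwsplit : d ++ [a] = w := by
              rw [hd, ← hy]; exact List.dropLast_append_getLast _
            have hgva : g = FreeGroup.mk d * va := by
              rw [hva, FreeGroup.mul_mk, hwsplit, ← hgw]
            have hg1eq : va * g * va⁻¹ = FreeGroup.mk ([a] ++ d) := by
              rw [hgva, ← FreeGroup.mul_mk]
              group
              rfl
            set g₁ := FreeGroup.mk ([a] ++ d) with hg₁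
            have hdlen : d.length = w.length - 1 := by rw [hd]; simp
            have hwpos : 0 < w.length := by rw [hwe]; simp
            have hrot : [a] ++ d = w.rotate (w.length - 1) := by
              rw [List.rotate_eq_drop_append_take (by omega), ← hwsplit]
              have h1 : (d ++ [a]).drop ((d ++ [a]).length - 1) = [a] := by
                simp
              have h2 : (d ++ [a]).take ((d ++ [a]).length - 1) = d := by
                simp
              rw [h1, h2]
            have hcrrot : List.Chain' NC (([a] ++ d) ++ ([a] ++ d)) := by
              rw [hrot]; exact cr_rotate hg _
            have hg₁word : g₁.toWord = [a] ++ d := toWord_mk_chain (cr_chain hcrrot)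
            have heq : u' * g₁ * u'⁻¹ = u * g * u⁻¹ := by
              rw [hsplit_conj, hg1eq]
            have hlen1 : (u' * g₁ * u'⁻¹).toWord.length ≤ g₁.toWord.length := by
              rw [heq, hg₁word]
              have : ([a] ++ d).length = w.length := by
                rw [← hwsplit]; simp
              rw [this]
              exact hlen
            have hcr1 : List.Chain' NC (g₁.toWord ++ g₁.toWord) := by
              rw [hg₁word]; exact hcrrot
            obtain ⟨k, hk⟩ := IH u' g₁ hu'len hcr1 hlen1
            refine ⟨(w.length - 1) + k, ?_⟩
            rw [← heq, hk, hg₁word, hrot, List.rotate_rotate, hwe]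
          · -- no cancellation: length too big, contradiction
            exfalso
            set a' : α × Bool := (a.1, !a.2) with ha'
            set Z := L' ++ (a :: w ++ [a']) ++ FreeGroup.invRev L' with hZ
            have hmkZ : u * g * u⁻¹ = FreeGroup.mk Z := by
              rw [← FreeGroup.mk_toWord (x := u), ← hLdef, hgw, FreeGroup.inv_mk,
                FreeGroup.mul_mk, FreeGroup.mul_mk, ← hLsplit]
              congr 1
              rw [hZ]
              have hinvrev : FreeGroup.invRev (L' ++ [a]) =
                  [a'] ++ FreeGroup.invRev L' := by
                simp [FreeGroup.invRev, ha']
              rw [hinvrev]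
              simp [List.append_assoc]
            have hybd : ∀ p ∈ w.getLast?, NC p a' := by
              intro p hp
              obtain ⟨hne, hpy⟩ := List.mem_getLast?_eq_getLast hp
              rw [ha']
              intro ⟨hc1, hc2⟩
              apply hy
              rw [← hpy]
              refine Prod.ext hc1 ?_
              rw [hc2, Bool.not_not]
            have hmidchain : List.Chain' NC (a :: w ++ [a']) := by
              rw [List.cons_append]
              rw [List.Chain', List.isChain_cons]
              constructor
              · intro q hq
                rw [hwe] at hq
                simp at hq
                subst hq
                exact hx
              · rw [List.isChain_append]
                refine ⟨hwchain, List.isChain_singleton _, ?_⟩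
                intro p hp q hq
                simp at hq
                subst hq
                exact hybd p hp
            have hZchain : List.Chain' NC Z := by
              rw [hZ, List.Chain', List.isChain_append]
              refine ⟨?_, chain'_invRev hL'chain, ?_⟩
              · rw [List.isChain_append]
                refine ⟨hL'chain, hmidchain, ?_⟩
                intro p hp q hq
                simp at hq
                subst hq
                exact hbdL p hp
              · intro p hp q hq
                rw [List.getLast?_append_of_ne_nil _ (by simp),
                  List.getLast?_concat] at hp
                simp at hp
                subst hp
                rcases eq_or_ne L' [] with hL'nil | hL'ne
                · rw [hL'nil] at hq
                  simp [FreeGroup.invRev] at hq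
                · have hhq : (FreeGroup.invRev L').head? =
                      L'.getLast?.map (fun p => (p.1, !p.2)) := by
                    rw [FreeGroup.invRev, List.head?_reverse, List.getLast?_map]
                  rw [hhq, List.getLast?_eq_getLast hL'ne] at hq
                  simp at hq
                  subst hq
                  rw [ha']
                  exact (NC_inv_iff _ a).2
                    (hbdL _ (by rw [List.getLast?_eq_getLast hL'ne]; rfl))
            have hword : (u * g * u⁻¹).toWord = Z := by
              rw [hmkZ]; exact toWord_mk_chain hZchain
            rw [hword] at hlen
            rw [hZ] at hlen
            simp [FreeGroup.invRev_length] at hlen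
            have hfin : L'.length + (w.length + (L'.length + 1) + 1) ≤ w.length := by
              simpa [List.length_append] using hlen
            omega

lemma chain'_getElem {w : List (α × Bool)} (hch : List.Chain' NC w) {i : ℕ}
    (hi : i + 1 < w.length) : NC (w[i]) (w[i + 1]) := by
  have := List.isChain_iff_getElem.1 hch i (by omega)
  simpa [List.get_eq_getElem] using this

lemma no_rot_inv {w : List (α × Bool)} (hw : w ≠ []) (hch : List.Chain' NC w)
    {k : ℕ} (h : FreeGroup.invRev w = w.rotate k) : False := by
  set n := w.length with hn
  have hn0 : 0 < n := List.length_pos_iff.2 hw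
  have E : ∀ i (hi : i < n),
      ((w[n - 1 - i]'(by omega)).1, !(w[n - 1 - i]'(by omega)).2)
        = w[(i + k) % n]'(Nat.mod_lt _ hn0) := by
    intro i hi
    have hilen : i < (FreeGroup.invRev w).length := by
      rw [FreeGroup.invRev_length]; omega
    have h1 := List.getElem_of_eq h hilen
    rw [List.getElem_rotate] at h1
    have h2 : (FreeGroup.invRev w)[i]'hilen
        = ((w[n - 1 - i]'(by omega)).1, !(w[n - 1 - i]'(by omega)).2) := by
      simp only [FreeGroup.invRev, List.getElem_reverse, List.getElem_map]
      congr 2 <;> · congr 1; simp [← hn]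
    rw [h2] at h1
    rw [h1]
  set k' := k % n with hk'
  have hk'n : k' < n := Nat.mod_lt _ hn0
  have hmod : ∀ i, (i + k) % n = (i + k') % n := by
    intro i
    conv_lhs => rw [Nat.add_mod]
    conv_rhs => rw [Nat.add_mod, hk', Nat.mod_mod_of_dvd k dvd_rfl]
  set s := n - 1 - k' with hs
  rcases Nat.even_or_odd s with he | ho
  · obtain ⟨m, hm⟩ := he
    have hilt : m < n := by omega
    have hidx : (m + k) % n = n - 1 - m := by
      rw [hmod m, Nat.mod_eq_of_lt (by omega)]; omega
    have hE := E m hilt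
    simp only [hidx] at hE
    have := congrArg Prod.snd hE
    simp at this
  · obtain ⟨m, hm⟩ := ho
    have hilt : m + 1 < n := by omega
    have hidx : (m + 1 + k) % n = n - 1 - m := by
      rw [hmod _, Nat.mod_eq_of_lt (by omega)]; omega
    have hE := E (m + 1) hilt
    simp only [hidx] at hE
    -- hE : inv of w[n - 1 - (m+1)] = w[n - 1 - m]
    have hj1 : n - 1 - (m + 1) + 1 = n - 1 - m := by omega
    have hcj := chain'_getElem hch (i := n - 1 - (m + 1)) (by omega)
    apply hcj
    simp only [hj1]
    have h1 := congrArg Prod.fst hE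
    have h2 := congrArg Prod.snd hE
    simp only at h1 h2
    exact ⟨h1, by rw [← h2, Bool.not_not]⟩


lemma main_aux : ∀ (N : ℕ) (g u : FreeGroup α), g.toWord.length ≤ N →
    u * g * u⁻¹ = g⁻¹ → g = 1 := by
  intro N
  induction N with
  | zero =>
    intro g u hg _
    rw [← FreeGroup.mk_toWord (x := g), List.length_eq_zero_iff.1 (Nat.le_zero.1 hg)]
    rfl
  | succ N IH =>
    intro g u hglen hconj
    set w := g.toWord with hw
    have hgw : g = FreeGroup.mk w := (FreeGroup.mk_toWord).symm
    have hwchain : List.Chain' NC w := chain'_toWord g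
    rcases hwe : w with _ | ⟨x, t⟩
    · rw [hgw, hwe]; rfl
    · have hwne : w ≠ [] := by rw [hwe]; simp
      by_cases hcyc : NC (w.getLast hwne) x
      · -- cyclically reduced: contradiction via rotation lemma
        exfalso
        have hcr : List.Chain' NC (w ++ w) := by
          rw [List.Chain', List.isChain_append]
          refine ⟨hwchain, hwchain, ?_⟩
          intro p hp q hq
          obtain ⟨_, hpy⟩ := List.mem_getLast?_eq_getLast hp
          have hqx : q = x := by
            rw [hwe] at hq
            simp at hq
            first | exact hq | exact hq.symm
          rw [hpy, hqx]
          exact hcyc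
        have hlen : (u * g * u⁻¹).toWord.length ≤ g.toWord.length := by
          rw [hconj, FreeGroup.toWord_inv, FreeGroup.invRev_length]
        obtain ⟨k, hk⟩ := conj_rotate u.toWord.length u g le_rfl hcr hlen
        rw [hconj, FreeGroup.toWord_inv] at hk
        exact no_rot_inv hwne hwchain hk
      · -- not cyclically reduced: strip and recurse
        have hyx : w.getLast hwne = (x.1, !x.2) := by
          simp only [NC, not_not] at hcyc
          exact Prod.ext hcyc.1 hcyc.2
        have hyx' : w.getLast? = some (x.1, !x.2) := by
          rw [List.getLast?_eq_getLast hwne, hyx]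
        have htne : t ≠ [] := by
          intro hte
          rw [hwe, hte] at hyx'
          simp at hyx'
          have := congrArg Prod.snd hyx'
          simp at this
        have h5 : t.getLast? = some (x.1, !x.2) := by
          rw [hwe] at hyx'
          rwa [show x :: t = [x] ++ t from rfl,
            List.getLast?_append_of_ne_nil _ htne] at hyx'
        have h6 : t.getLast htne = (x.1, !x.2) :=
          Option.some.inj ((List.getLast?_eq_getLast htne).symm.trans h5)
        have htsplit : t.dropLast ++ [(x.1, !x.2)] = t := by
          rw [← h6]
          exact List.dropLast_append_getLast htne
        set t' := t.dropLast with ht'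
        have ht'chain : List.Chain' NC t' := by
          have h1 : List.Chain' NC t := by
            rw [hwe] at hwchain
            exact hwchain.tail
          rw [← htsplit] at h1
          exact (List.isChain_append.1 h1).1
        set vx := FreeGroup.mk [x] with hvx
        have hvxinv : vx⁻¹ = FreeGroup.mk [(x.1, !x.2)] := inv_letter x
        have hgsplit : g = vx * FreeGroup.mk t' * vx⁻¹ := by
          rw [hvxinv, hvx, FreeGroup.mul_mk, FreeGroup.mul_mk, hgw, hwe, ← htsplit]
          rfl
        set g' := FreeGroup.mk t' with hg'
        have hg'word : g'.toWord = t' := toWord_mk_chain ht'chain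
        have hg'len : g'.toWord.length ≤ N := by
          rw [hg'word]
          have h1 : w.length ≤ N + 1 := hglen
          have h2 : w.length = t.length + 1 := by rw [hwe]; simp
          have h3 : t.length = t'.length + 1 := by
            conv_lhs => rw [← htsplit]
            simp
          omega
        have hconj' : (vx⁻¹ * u * vx) * g' * (vx⁻¹ * u * vx)⁻¹ = g'⁻¹ := by
          have h1 : vx⁻¹ * (u * g * u⁻¹) * vx = vx⁻¹ * g⁻¹ * vx := by
            rw [hconj]
          rw [hgsplit] at h1
          calc (vx⁻¹ * u * vx) * g' * (vx⁻¹ * u * vx)⁻¹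
              = vx⁻¹ * (u * (vx * g' * vx⁻¹) * u⁻¹) * vx := by group
            _ = vx⁻¹ * (vx * g' * vx⁻¹)⁻¹ * vx := by
                rw [show u * (vx * g' * vx⁻¹) * u⁻¹ = (vx * g' * vx⁻¹)⁻¹ from by
                  simpa [hgsplit] using hconj]
            _ = g'⁻¹ := by group
        have := IH g' (vx⁻¹ * u * vx) hg'len hconj'
        rw [hgsplit, this]
        group

theorem conj_inv_eq_one (g u : FreeGroup α) (hconj : u * g * u⁻¹ = g⁻¹) : g = 1 :=
  main_aux g.toWord.length g u le_rfl hconj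

end ConjAux

/-- In a free group, the only element conjugate to its own inverse is the identity. -/
theorem freeGroup_conj_inv_eq_one {α : Type*} (g h : FreeGroup α)
    (hconj : h * g * h⁻¹ = g⁻¹) : g = 1 := by
  letI := Classical.decEq α
  exact ConjAux.conj_inv_eq_one g h hconj
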